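/- With the noop action included, the sequence of reachable-state sets satisfies: Z_i = Z_{i+1} implies Z_i = Z_j for all j ≥ i; consequently, a goal state is reachable from the initial state if and only if the goal set G intersects Z_k, where k is the first index with Z_k = Z_{k+1}. -/
import Mathlib


theorem fixpoint_goal_test_correct
    (State : Type) [Fintype State]
    (T : State → State → Prop) (hrefl : ∀ z, T z z)
    (z_init : State) (G : Set State)
    (Z : ℕ → Set State)
    (hZ0 : Z 0 = {z_init})
    (hZs : ∀ i, Z (i + 1) = Z i ∪ {z' | ∃ z ∈ Z i, T z z'}) :
    (∀ i, Z i = Z (i + 1) → ∀ j, i ≤ j → Z j = Z i) ∧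
    (∀ k, Z k = Z (k + 1) → (∀ j < k, Z j ≠ Z (j + 1)) →
      ((∃ (m : ℕ) (c : ℕ → State), c 0 = z_init ∧ (∀ j < m, T (c j) (c (j + 1))) ∧ c m ∈ G)
        ↔ ∃ z ∈ G, z ∈ Z k)) := by
  -- stability of a fixpoint
  have stab : ∀ i, Z i = Z (i + 1) → ∀ j, i ≤ j → Z j = Z i := by
    intro i hfix j hij
    induction j with
    | zero => obtain rfl : i = 0 := Nat.le_zero.mp hij; rfl
    | succ n ih =>
      rcases Nat.lt_or_ge i (n+1) with h | h
      · have hn : i ≤ n := by omega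
        have hZn : Z n = Z i := ih hn
        rw [hZs n, hZn, ← hZs i, ← hfix]
      · have : i = n + 1 := by omega
        rw [this]
  -- monotonicity
  have mono : ∀ i j, i ≤ j → Z i ⊆ Z j := by
    intro i j hij
    induction j with
    | zero => obtain rfl : i = 0 := Nat.le_zero.mp hij; exact subset_rfl
    | succ n ih =>
      rcases Nat.lt_or_ge i (n+1) with h | h
      · have := ih (by omega)
        rw [hZs n]; exact this.trans Set.subset_union_left
      · have : i = n + 1 := by omega
        rw [this]
  -- path characterization: z ∈ Z n ↔ path of length exactly n
  have char : ∀ n z, z ∈ Z n ↔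
      ∃ c : ℕ → State, c 0 = z_init ∧ (∀ j < n, T (c j) (c (j + 1))) ∧ c n = z := by
    intro n
    induction n with
    | zero =>
      intro z
      rw [hZ0]
      constructor
      · intro hz
        exact ⟨fun _ => z_init, rfl, fun j hj => absurd hj (Nat.not_lt_zero j), hz.symm⟩
      · rintro ⟨c, h0, _, hn⟩
        simp [← hn, h0, Set.mem_singleton_iff]
    | succ n ih =>
      intro z
      rw [hZs n]
      constructor
      · rintro (hz | ⟨w, hw, hT⟩)
        · rcases (ih z).mp hz with ⟨c, h0, hstep, hn⟩
          refine ⟨fun j => if j ≤ n then c j else z, by simp [h0], ?_, by simp⟩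
          intro j hj
          rcases Nat.lt_or_ge j n with h | h
          · simpa [Nat.le_of_lt h, Nat.succ_le_of_lt h] using hstep j h
          · have hjn : j = n := by omega
            subst hjn
            simpa [hn] using hrefl z
        · rcases (ih w).mp hw with ⟨c, h0, hstep, hn⟩
          refine ⟨fun j => if j ≤ n then c j else z, by simp [h0], ?_, by simp⟩
          intro j hj
          rcases Nat.lt_or_ge j n with h | h
          · simpa [Nat.le_of_lt h, Nat.succ_le_of_lt h] using hstep j h
          · have hjn : j = n := by omega
            subst hjn
            simpa [hn] using hT
      · rintro ⟨c, h0, hstep, hn⟩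
        right
        refine ⟨c n, (ih (c n)).mpr ⟨c, h0, fun j hj => hstep j (by omega), rfl⟩, ?_⟩
        rw [← hn]; exact hstep n (Nat.lt_succ_self n)
  refine ⟨stab, ?_⟩
  intro k hfix _
  constructor
  · rintro ⟨m, c, h0, hstep, hG⟩
    have hm : c m ∈ Z m := (char m (c m)).mpr ⟨c, h0, hstep, rfl⟩
    refine ⟨c m, hG, ?_⟩
    rcases le_or_gt m k with h | h
    · exact mono m k h hm
    · rw [← stab k hfix m (Nat.le_of_lt h)]; exact hm
  · rintro ⟨z, hzG, hzk⟩
    rcases (char k z).mp hzk with ⟨c, h0, hstep, hn⟩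
    exact ⟨k, c, h0, hstep, hn ▸ hzG⟩
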